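/- Girardization: if the parameters of superLL(E,de,co,dg,p) satisfy the Girardization axioms (gir1)–(gir5), then every sequent provable in superLL(E,de,co,dg,p) is provable in the system obtained by removing the functorial promotion rule and the digging rule and adding Girard's promotion rule (p_g); moreover if the original proof is cut-free, so is the resulting proof. -/

import Mathlib

/-- Linear logic formulas with exponential connectives indexed by signatures in `E`. -/
inductive Formula (E : Type) : Type
  | var : ℕ → Formula E
  | covar : ℕ → Formula E
  | tens : Formula E → Formula E → Formula E
  | parr : Formula E → Formula E → Formula E
  | one : Formula E
  | bot : Formula E
  | awith : Formula E → Formula E → Formula E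
  | aplus : Formula E → Formula E → Formula E
  | top : Formula E
  | zero : Formula E
  | oc : E → Formula E → Formula E
  | wn : E → Formula E → Formula E

namespace Formula

/-- Duality on formulas. -/
def dual {E : Type} : Formula E → Formula E
  | var n => covar n
  | covar n => var n
  | tens A B => parr A.dual B.dual
  | parr A B => tens A.dual B.dual
  | one => bot
  | bot => one
  | awith A B => aplus A.dual B.dual
  | aplus A B => awith A.dual B.dual
  | top => zero
  | zero => top
  | oc e A => wn e A.dual
  | wn e A => oc e A.dual

end Formula

/-- The sequent calculus superLL(E, de, co, dg, p).  The `Bool` index records whether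
the cut rule may be used (`true` = cut allowed, `false` = cut-free proofs only). -/
inductive SuperLL {E : Type} (de : E → Prop) (co : List E → E → Prop)
    (dg : E → E → E → Prop) (p : ℕ → E → Prop) : Bool → List (Formula E) → Prop
  | ax (b) (A : Formula E) : SuperLL de co dg p b [A, A.dual]
  | ex {b Γ Δ} : SuperLL de co dg p b Γ → Γ.Perm Δ → SuperLL de co dg p b Δ
  | cut {A : Formula E} {Γ Δ : List (Formula E)} : SuperLL de co dg p true (A :: Γ) →
      SuperLL de co dg p true (A.dual :: Δ) → SuperLL de co dg p true (Γ ++ Δ)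
  | tens {b} {A B : Formula E} {Γ Δ : List (Formula E)} : SuperLL de co dg p b (A :: Γ) → SuperLL de co dg p b (B :: Δ) →
      SuperLL de co dg p b (A.tens B :: (Γ ++ Δ))
  | parr {b} {A B : Formula E} {Γ : List (Formula E)} : SuperLL de co dg p b (A :: B :: Γ) →
      SuperLL de co dg p b (A.parr B :: Γ)
  | one (b) : SuperLL de co dg p b [Formula.one]
  | bot {b Γ} : SuperLL de co dg p b Γ → SuperLL de co dg p b (Formula.bot :: Γ)
  | awith {b} {A B : Formula E} {Γ : List (Formula E)} : SuperLL de co dg p b (A :: Γ) → SuperLL de co dg p b (B :: Γ) →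
      SuperLL de co dg p b (A.awith B :: Γ)
  | aplus1 {b} {A B : Formula E} {Γ : List (Formula E)} : SuperLL de co dg p b (A :: Γ) →
      SuperLL de co dg p b (A.aplus B :: Γ)
  | aplus2 {b} {A B : Formula E} {Γ : List (Formula E)} : SuperLL de co dg p b (B :: Γ) →
      SuperLL de co dg p b (A.aplus B :: Γ)
  | top (b) (Γ) : SuperLL de co dg p b (Formula.top :: Γ)
  | der {b e A Γ} : de e → SuperLL de co dg p b (A :: Γ) →
      SuperLL de co dg p b (Formula.wn e A :: Γ)
  | con {b} {l : List E} {e A Γ} : co l e →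
      SuperLL de co dg p b (l.map (fun ei => Formula.wn ei A) ++ Γ) →
      SuperLL de co dg p b (Formula.wn e A :: Γ)
  | dig {b e1 e2 e A Γ} : dg e1 e2 e →
      SuperLL de co dg p b (Formula.wn e1 (Formula.wn e2 A) :: Γ) →
      SuperLL de co dg p b (Formula.wn e A :: Γ)
  | prom {b e A} {Δ : List (Formula E)} : p Δ.length e → SuperLL de co dg p b (A :: Δ) →
      SuperLL de co dg p b (Formula.oc e A :: Δ.map (Formula.wn e))

/-- superLL with Girard's promotion rule instead of functorial promotion and digging:
the functorial promotion and digging rules are removed and Girard's promotion `promg`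
is added. -/
inductive SuperLLG {E : Type} (de : E → Prop) (co : List E → E → Prop)
    (dg : E → E → E → Prop) (p : ℕ → E → Prop) : Bool → List (Formula E) → Prop
  | ax (b) (A : Formula E) : SuperLLG de co dg p b [A, A.dual]
  | ex {b Γ Δ} : SuperLLG de co dg p b Γ → Γ.Perm Δ → SuperLLG de co dg p b Δ
  | cut {A : Formula E} {Γ Δ : List (Formula E)} : SuperLLG de co dg p true (A :: Γ) →
      SuperLLG de co dg p true (A.dual :: Δ) → SuperLLG de co dg p true (Γ ++ Δ)
  | tens {b} {A B : Formula E} {Γ Δ : List (Formula E)} : SuperLLG de co dg p b (A :: Γ) →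
      SuperLLG de co dg p b (B :: Δ) → SuperLLG de co dg p b (A.tens B :: (Γ ++ Δ))
  | parr {b} {A B : Formula E} {Γ : List (Formula E)} : SuperLLG de co dg p b (A :: B :: Γ) →
      SuperLLG de co dg p b (A.parr B :: Γ)
  | one (b) : SuperLLG de co dg p b [Formula.one]
  | bot {b Γ} : SuperLLG de co dg p b Γ → SuperLLG de co dg p b (Formula.bot :: Γ)
  | awith {b} {A B : Formula E} {Γ : List (Formula E)} : SuperLLG de co dg p b (A :: Γ) →
      SuperLLG de co dg p b (B :: Γ) → SuperLLG de co dg p b (A.awith B :: Γ)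
  | aplus1 {b} {A B : Formula E} {Γ : List (Formula E)} : SuperLLG de co dg p b (A :: Γ) →
      SuperLLG de co dg p b (A.aplus B :: Γ)
  | aplus2 {b} {A B : Formula E} {Γ : List (Formula E)} : SuperLLG de co dg p b (B :: Γ) →
      SuperLLG de co dg p b (A.aplus B :: Γ)
  | top (b) (Γ) : SuperLLG de co dg p b (Formula.top :: Γ)
  | der {b e A Γ} : de e → SuperLLG de co dg p b (A :: Γ) →
      SuperLLG de co dg p b (Formula.wn e A :: Γ)
  | con {b} {l : List E} {e A Γ} : co l e →
      SuperLLG de co dg p b (l.map (fun ei => Formula.wn ei A) ++ Γ) →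
      SuperLLG de co dg p b (Formula.wn e A :: Γ)
  | promg {b} {e : E} {A : Formula E} {eps es : List E} {As : List (Formula E)} :
      List.Forall₂ (fun εi ei => dg e εi ei) eps es → eps.length = As.length →
      p As.length e →
      SuperLLG de co dg p b (A :: List.zipWith Formula.wn eps As) →
      SuperLLG de co dg p b (Formula.oc e A :: List.zipWith Formula.wn es As)

open List

section Helpers

variable {α β γ δ : Type*}

lemma f2_append {R : α → β → Prop} :
    ∀ {l₁ l₂ : List α} {m₁ m₂ : List β}, List.Forall₂ R l₁ m₁ → List.Forall₂ R l₂ m₂ →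
      List.Forall₂ R (l₁ ++ l₂) (m₁ ++ m₂)
  | _, _, _, _, List.Forall₂.nil, h => h
  | _, _, _, _, List.Forall₂.cons h t, h2 => List.Forall₂.cons h (f2_append t h2)

lemma forall₂_replicate' {R : α → β → Prop} {a : α} {b : β} (h : R a b) :
    ∀ n, List.Forall₂ R (List.replicate n a) (List.replicate n b)
  | 0 => List.Forall₂.nil
  | n+1 => List.Forall₂.cons h (forall₂_replicate' h n)

lemma forall₂_zip_mem {R : α → β → Prop} :
    ∀ {l : List α} {m : List β}, List.Forall₂ R l m → ∀ pr ∈ l.zip m, R pr.1 pr.2 := by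
  intro l m h
  induction h with
  | nil => simp
  | cons h1 _ ih =>
    intro pr hpr
    rcases List.mem_cons.1 hpr with rfl | hpr
    · exact h1
    · exact ih pr hpr

lemma map_eq_map_forall₂ {f : α → γ} {g : β → γ} :
    ∀ {l : List α} {m : List β}, l.map f = m.map g → List.Forall₂ (fun a b => f a = g b) l m := by
  intro l
  induction l with
  | nil =>
    intro m h
    cases m with
    | nil => exact List.Forall₂.nil
    | cons b m => simp at h
  | cons a l ih =>
    intro m h
    cases m with
    | nil => simp at h
    | cons b m =>
      simp only [List.map_cons, List.cons.injEq] at h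
      exact List.Forall₂.cons h.1 (ih h.2)

lemma zipWith_replicate_left' (f : α → β → γ) (a : α) :
    ∀ (l : List β), List.zipWith f (List.replicate l.length a) l = l.map (f a)
  | [] => rfl
  | b :: l => by simp [List.replicate_succ, zipWith_replicate_left' f a l]

lemma zipWith_replicate_right' (f : α → β → γ) (b : β) :
    ∀ (l : List α), List.zipWith f l (List.replicate l.length b) = l.map (fun x => f x b)
  | [] => rfl
  | a :: l => by simp [List.replicate_succ, zipWith_replicate_right' f b l]

lemma zipWith_map_same (f : β → γ → α) (u : δ → β) (v : δ → γ) :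
    ∀ (l : List δ), List.zipWith f (l.map u) (l.map v) = l.map (fun x => f (u x) (v x))
  | [] => rfl
  | x :: l => by simp [zipWith_map_same f u v l]

lemma perm_cons_app (a : α) (l m : List α) : (a :: (l ++ m)).Perm (l ++ a :: m) :=
  List.perm_middle.symm

lemma perm_cons_app_app (a : α) (l m n : List α) :
    (a :: (l ++ (m ++ n))).Perm (l ++ (m ++ a :: n)) := by
  have := (List.perm_middle (a := a) (l₁ := l ++ m) (l₂ := n)).symm
  simpa [List.append_assoc] using this

lemma perm_app_swap3 (a b c : List α) : (a ++ (b ++ c)).Perm (b ++ (a ++ c)) := by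
  calc a ++ (b ++ c) = (a ++ b) ++ c := (List.append_assoc _ _ _).symm
    _ ~ (b ++ a) ++ c := (List.perm_append_comm).append_right c
    _ = b ++ (a ++ c) := List.append_assoc _ _ _

lemma perm_interchange (a b c d : List α) :
    ((a ++ b) ++ (c ++ d)).Perm ((a ++ c) ++ (b ++ d)) := by
  calc (a ++ b) ++ (c ++ d) = a ++ (b ++ (c ++ d)) := List.append_assoc _ _ _
    _ ~ a ++ (c ++ (b ++ d)) := (perm_app_swap3 b c d).append_left a
    _ = (a ++ c) ++ (b ++ d) := (List.append_assoc _ _ _).symm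

lemma perm_pair_cases {a b : α} {l : List α} (h : l.Perm [a, b]) : l = [a, b] ∨ l = [b, a] := by
  match l, h, h.length_eq with
  | [x, y], h, _ =>
    have hx : x ∈ [a, b] := h.subset (by simp)
    rcases List.mem_pair.1 hx with rfl | rfl
    · left
      have h2 : y = b := by simpa using List.perm_singleton.1 h.cons_inv
      rw [h2]
    · right
      have h2 : y = a := by
        simpa using List.perm_singleton.1 (h.trans (List.Perm.swap x a [])).cons_inv
      rw [h2]

lemma cons_perm_cases (f : α → β) {x : β} {Γ Δ : List β} {L : List α}
    (h : (x :: Γ).Perm (L.map f ++ Δ)) :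
    (∃ p y q, L = p ++ y :: q ∧ x = f y ∧ Γ.Perm ((p ++ q).map f ++ Δ)) ∨
    (∃ Δ1 Δ2, Δ = Δ1 ++ x :: Δ2 ∧ Γ.Perm (L.map f ++ (Δ1 ++ Δ2))) := by
  have hx : x ∈ L.map f ++ Δ := h.subset (List.mem_cons_self)
  rcases List.mem_append.1 hx with hx | hx
  · rcases List.mem_map.1 hx with ⟨y, hyL, hy⟩
    rcases List.append_of_mem hyL with ⟨p, q, rfl⟩
    left
    refine ⟨p, y, q, rfl, hy.symm, ?_⟩
    have h2 : ((p ++ y :: q).map f ++ Δ).Perm (f y :: ((p ++ q).map f ++ Δ)) := by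
      simpa [List.append_assoc] using
        (List.perm_middle (a := f y) (l₁ := p.map f) (l₂ := q.map f ++ Δ))
    rw [hy] at h2
    exact (h.trans h2).cons_inv
  · rcases List.append_of_mem hx with ⟨Δ1, Δ2, rfl⟩
    right
    refine ⟨Δ1, Δ2, rfl, ?_⟩
    have h2 : (L.map f ++ (Δ1 ++ x :: Δ2)).Perm (x :: (L.map f ++ (Δ1 ++ Δ2))) := by
      simpa [List.append_assoc] using
        (List.perm_middle (a := x) (l₁ := L.map f ++ Δ1) (l₂ := Δ2))
    exact (h.trans h2).cons_inv

lemma split_perm (f : α → β) :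
    ∀ (Γ1 : List β) {Γ2 : List β} {L : List α} {Δ : List β},
      (Γ1 ++ Γ2).Perm (L.map f ++ Δ) →
      ∃ L1 L2 Δ1 Δ2, L.Perm (L1 ++ L2) ∧ Δ.Perm (Δ1 ++ Δ2) ∧
        Γ1.Perm (L1.map f ++ Δ1) ∧ Γ2.Perm (L2.map f ++ Δ2) := by
  intro Γ1
  induction Γ1 with
  | nil => intro Γ2 L Δ h; exact ⟨[], L, [], Δ, .refl _, .refl _, .refl _, h⟩
  | cons x Γ1 ih =>
    intro Γ2 L Δ h
    rcases cons_perm_cases f h with ⟨p, y, q, rfl, rfl, h'⟩ | ⟨Δ1, Δ2, rfl, h'⟩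
    · obtain ⟨L1, L2, Δ1, Δ2, hL, hΔ, h1, h2⟩ := ih h'
      refine ⟨y :: L1, L2, Δ1, Δ2, ?_, hΔ, (h1.cons _), h2⟩
      calc p ++ y :: q ~ y :: (p ++ q) := List.perm_middle
        _ ~ y :: (L1 ++ L2) := hL.cons y
    · obtain ⟨L1, L2, Δ1', Δ2', hL, hΔ, h1, h2⟩ := ih h'
      refine ⟨L1, L2, x :: Δ1', Δ2', hL, ?_, ?_, h2⟩
      · calc Δ1 ++ x :: Δ2 ~ x :: (Δ1 ++ Δ2) := List.perm_middle
          _ ~ x :: (Δ1' ++ Δ2') := hΔ.cons x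
      · exact (h1.cons x).trans (perm_cons_app x _ _)

lemma perm_map_pullback (f : α → β) :
    ∀ {m : List β} {l : List α}, (l.map f).Perm m → ∃ l', l.Perm l' ∧ l'.map f = m := by
  intro m
  induction m with
  | nil =>
    intro l h
    have h0 : l = [] := by simpa using List.map_eq_nil_iff.1 h.eq_nil
    subst h0
    exact ⟨[], .refl _, rfl⟩
  | cons x m ih =>
    intro l h
    have hx : x ∈ l.map f := h.symm.subset (List.mem_cons_self)
    rcases List.mem_map.1 hx with ⟨a, ha, rfl⟩
    rcases List.append_of_mem ha with ⟨p, q, rfl⟩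
    have h2 : ((p ++ a :: q).map f).Perm (f a :: ((p ++ q).map f)) := by
      simpa [List.append_assoc] using
        (List.perm_middle (a := f a) (l₁ := p.map f) (l₂ := q.map f))
    have h3 : ((p ++ q).map f).Perm m := (h2.symm.trans h).cons_inv
    obtain ⟨l', hl, hm⟩ := ih h3
    exact ⟨a :: l', List.perm_middle.trans (hl.cons a), by simp [hm]⟩

end Helpers

section Main

lemma Formula.dual_dual {E : Type} : ∀ A : Formula E, A.dual.dual = A := by
  intro A; induction A <;> simp [Formula.dual, *]

lemma zip3_spec {E α : Type} (w : E → α → α) :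
    ∀ (eps es : List E) (As : List α), eps.length = es.length → eps.length = As.length →
      List.zipWith w es As = (eps.zip (es.zip As)).map (fun t => w t.2.1 t.2.2) ∧
      List.zipWith w eps As = (eps.zip (es.zip As)).map (fun t => w t.1 t.2.2) := by
  intro eps
  induction eps with
  | nil =>
    intro es As h1 h2
    cases es with
    | nil =>
      cases As with
      | nil => simp
      | cons C As => simp at h2
    | cons b es => simp at h1
  | cons a eps ih =>
    intro es As h1 h2
    cases es with
    | nil => simp at h1
    | cons b es =>
      cases As with
      | nil => simp at h2
      | cons C As =>
        simp only [List.length_cons, Nat.add_right_cancel_iff] at h1 h2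
        obtain ⟨ha, hb⟩ := ih es As h1 h2
        simp [List.zip_cons_cons, ha, hb]

lemma zip3_mem {E α : Type} {R : E → E → Prop} :
    ∀ {eps es : List E}, List.Forall₂ R eps es →
      ∀ (As : List α), ∀ t ∈ eps.zip (es.zip As), R t.1 t.2.1 := by
  intro eps es h
  induction h with
  | nil => simp
  | cons h1 h2 ih =>
    intro As
    cases As with
    | nil => simp
    | cons C As =>
      intro t ht
      rcases List.mem_cons.1 ht with rfl | ht
      · exact h1
      · exact ih As t ht

lemma choose_ds {E : Type} {dg : E → E → E → Prop}
    (gir4 : ∀ e1 e2 e3 e' e : E, dg e1 e2 e' → dg e' e3 e →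
      ∃ e'' : E, dg e2 e3 e'' ∧ dg e1 e'' e)
    {e e2 : E} {A : Formula E} :
    ∀ {T1 : List (E × E × Formula E)} {L : List (E × E)},
      List.Forall₂ (fun t pr =>
        Formula.wn t.2.1 t.2.2 = Formula.wn pr.1 (Formula.wn e2 A)) T1 L →
      (∀ t ∈ T1, dg e t.1 t.2.1) → (∀ pr ∈ L, dg pr.1 e2 pr.2) →
      ∃ L' : List (E × E),
        (∀ pr ∈ L', dg pr.1 e2 pr.2) ∧
        L'.map (fun pr => Formula.wn pr.1 (Formula.wn e2 A)) =
          T1.map (fun t => Formula.wn t.1 t.2.2) ∧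
        List.Forall₂ (fun pr' pr => dg e pr'.2 pr.2) L' L := by
  intro T1 L h
  induction h with
  | nil => exact fun _ _ => ⟨[], by simp, by simp, List.Forall₂.nil⟩
  | @cons t pr T1' L'' heq htl ih =>
    intro h1 h2
    obtain ⟨L', hL1, hL2, hL3⟩ := ih (fun t ht => h1 t (List.mem_cons_of_mem _ ht))
      (fun q hq => h2 q (List.mem_cons_of_mem _ hq))
    injection heq with he1 he2
    have hd0 : dg e t.1 pr.1 := he1 ▸ h1 t (List.mem_cons_self)
    obtain ⟨e'', hd1, hd2⟩ := gir4 e t.1 e2 pr.1 pr.2 hd0 (h2 pr (List.mem_cons_self))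
    refine ⟨(t.1, e'') :: L', ?_, ?_, List.Forall₂.cons hd2 hL3⟩
    · intro q hq
      rcases List.mem_cons.1 hq with rfl | hq
      · exact hd1
      · exact hL1 q hq
    · simp [hL2, he2]

lemma der_list {E : Type} {de : E → Prop} {co : List E → E → Prop}
    {dg : E → E → E → Prop} {p : ℕ → E → Prop} {b : Bool} {e' : E} (hde : de e') :
    ∀ (Δ Γ : List (Formula E)), SuperLLG de co dg p b (Δ ++ Γ) →
      SuperLLG de co dg p b (Δ.map (Formula.wn e') ++ Γ) := by
  intro Δ
  induction Δ with
  | nil => intro Γ h; exact h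
  | cons B Δ ih =>
    intro Γ h
    have h1 := SuperLLG.der hde h
    have h2 := SuperLLG.ex h1 (perm_cons_app _ _ _)
    have h3 := ih (Formula.wn e' B :: Γ) h2
    exact SuperLLG.ex h3 List.perm_middle

end Main

theorem dig_adm {E : Type} {de : E → Prop} {co : List E → E → Prop}
    {dg : E → E → E → Prop} {p : ℕ → E → Prop}
    (gir1 : ∀ e1 e2 e : E, dg e1 e2 e → p 1 e1)
    (gir2 : ∀ e1 e2 e : E, de e1 → dg e1 e2 e → co [e2] e)
    (gir3 : ∀ (l : List E) (e1 e2 e : E), co l e1 → dg e1 e2 e →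
      ∃ l' : List E, List.Forall₂ (fun εi ε'i => dg εi e2 ε'i) l l' ∧ co l' e)
    (gir4 : ∀ e1 e2 e3 e' e : E, dg e1 e2 e' → dg e' e3 e →
      ∃ e'' : E, dg e2 e3 e'' ∧ dg e1 e'' e)
    (e2 : E) (A : Formula E) :
    ∀ {b : Bool} {Γ : List (Formula E)}, SuperLLG de co dg p b Γ →
      ∀ (L : List (E × E)) (Δ : List (Formula E)),
        (∀ pr ∈ L, dg pr.1 e2 pr.2) →
        Γ.Perm (L.map (fun pr => Formula.wn pr.1 (Formula.wn e2 A)) ++ Δ) →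
        SuperLLG de co dg p b (L.map (fun pr => Formula.wn pr.2 A) ++ Δ) := by
  intro b Γ h
  induction h with
  | ax b B =>
    intro L Δ hp hperm
    match L with
    | [] =>
      simp only [List.map_nil, List.nil_append] at hperm ⊢
      exact SuperLLG.ex (SuperLLG.ax b B) hperm
    | [pr] =>
      have hdg : dg pr.1 e2 pr.2 := hp pr (List.mem_cons_self)
      have hax : SuperLLG de co dg p b [Formula.oc e2 A.dual, Formula.wn e2 A] := by
        have h0 := SuperLLG.ax (de := de) (co := co) (dg := dg) (p := p) b
          (Formula.oc e2 A.dual)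
        simpa [Formula.dual, Formula.dual_dual] using h0
      have hprem : SuperLLG de co dg p b
          (Formula.oc e2 A.dual :: List.zipWith Formula.wn [e2] [A]) := hax
      have hpromg := SuperLLG.promg (e := pr.1)
        (List.Forall₂.cons hdg List.Forall₂.nil) rfl (gir1 _ _ _ hdg) hprem
      have hgoal : SuperLLG de co dg p b
          [Formula.wn pr.2 A, Formula.oc pr.1 (Formula.oc e2 A.dual)] :=
        SuperLLG.ex hpromg (List.Perm.swap _ _ _)
      rcases perm_pair_cases hperm.symm with heq | heq <;>
        simp only [List.map_cons, List.map_nil, List.singleton_append,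
          List.cons.injEq] at heq
      · obtain ⟨rfl, rfl⟩ := heq
        simpa [Formula.dual] using hgoal
      · obtain ⟨h1, rfl⟩ := heq
        have hB : B = Formula.oc pr.1 (Formula.oc e2 A.dual) := by
          rw [← Formula.dual_dual B, ← h1]; simp [Formula.dual]
        rw [hB]
        simpa using hgoal
    | pr1 :: pr2 :: L' =>
      exfalso
      have hl := hperm.length_eq
      simp at hl
      obtain ⟨rfl, rfl⟩ := hl
      rcases perm_pair_cases hperm.symm with heq | heq <;>
        simp only [List.map_cons, List.map_nil, List.append_nil,
          List.cons.injEq, and_true] at heq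
      · obtain ⟨rfl, h2⟩ := heq
        simp [Formula.dual] at h2
      · obtain ⟨h1, rfl⟩ := heq
        simp [Formula.dual] at h1
  | ex h hpm ih =>
    intro L Δ hp hperm
    exact ih L Δ hp (hpm.trans hperm)
  | @cut B Γ1 Γ2 h1 h2 ih1 ih2 =>
    intro L Δ hp hperm
    obtain ⟨L1, L2, Δ1, Δ2, hL, hΔ, hg1, hg2⟩ := split_perm _ Γ1 hperm
    have m1 : ∀ pr ∈ L1, dg pr.1 e2 pr.2 := fun pr h =>
      hp pr (hL.symm.subset (List.mem_append_left _ h))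
    have m2 : ∀ pr ∈ L2, dg pr.1 e2 pr.2 := fun pr h =>
      hp pr (hL.symm.subset (List.mem_append_right _ h))
    have r1 := ih1 L1 (B :: Δ1) m1 ((hg1.cons B).trans (perm_cons_app _ _ _))
    have r2 := ih2 L2 (B.dual :: Δ2) m2 ((hg2.cons B.dual).trans (perm_cons_app _ _ _))
    have hc := SuperLLG.cut (SuperLLG.ex r1 (perm_cons_app _ _ _).symm)
      (SuperLLG.ex r2 (perm_cons_app _ _ _).symm)
    refine SuperLLG.ex hc ?_
    calc (L1.map _ ++ Δ1) ++ (L2.map _ ++ Δ2)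
        ~ (L1.map _ ++ L2.map _) ++ (Δ1 ++ Δ2) := perm_interchange _ _ _ _
      _ ~ L.map _ ++ Δ := by
          refine List.Perm.append ?_ hΔ.symm
          simpa [List.map_append] using (hL.map (fun pr => Formula.wn pr.2 A)).symm
  | @tens b B C Γ1 Γ2 h1 h2 ih1 ih2 =>
    intro L Δ hp hperm
    rcases cons_perm_cases _ hperm with ⟨P, y, Q, rfl, hx, _⟩ | ⟨Δ1, Δ2, rfl, hperm'⟩
    · exact nomatch hx
    obtain ⟨L1, L2, Δa, Δb, hL, hΔ, hg1, hg2⟩ := split_perm _ Γ1 hperm'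
    have m1 : ∀ pr ∈ L1, dg pr.1 e2 pr.2 := fun pr h =>
      hp pr (hL.symm.subset (List.mem_append_left _ h))
    have m2 : ∀ pr ∈ L2, dg pr.1 e2 pr.2 := fun pr h =>
      hp pr (hL.symm.subset (List.mem_append_right _ h))
    have r1 := ih1 L1 (B :: Δa) m1 ((hg1.cons B).trans (perm_cons_app _ _ _))
    have r2 := ih2 L2 (C :: Δb) m2 ((hg2.cons C).trans (perm_cons_app _ _ _))
    have hc := SuperLLG.tens (SuperLLG.ex r1 (perm_cons_app _ _ _).symm)
      (SuperLLG.ex r2 (perm_cons_app _ _ _).symm)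
    refine SuperLLG.ex hc ?_
    have hmid : ((L1.map (fun pr => Formula.wn pr.2 A) ++ Δa) ++
        (L2.map (fun pr => Formula.wn pr.2 A) ++ Δb)).Perm
        (L.map (fun pr => Formula.wn pr.2 A) ++ (Δ1 ++ Δ2)) := by
      calc (L1.map _ ++ Δa) ++ (L2.map _ ++ Δb)
          ~ (L1.map _ ++ L2.map _) ++ (Δa ++ Δb) := perm_interchange _ _ _ _
        _ ~ L.map _ ++ (Δ1 ++ Δ2) := by
            refine List.Perm.append ?_ hΔ.symm
            simpa [List.map_append] using (hL.map (fun pr => Formula.wn pr.2 A)).symm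
    exact (hmid.cons _).trans (perm_cons_app_app _ _ _ _)
  | @parr b B C Γ h ih =>
    intro L Δ hp hperm
    rcases cons_perm_cases _ hperm with ⟨P, y, Q, rfl, hx, _⟩ | ⟨Δ1, Δ2, rfl, hperm'⟩
    · exact nomatch hx
    have hchain : (B :: C :: Γ).Perm
        (L.map (fun pr => Formula.wn pr.1 (Formula.wn e2 A)) ++ (B :: C :: (Δ1 ++ Δ2))) :=
      ((hperm'.cons C).cons B).trans
        (((perm_cons_app C _ _).cons B).trans (perm_cons_app B _ _))
    have r := ih L (B :: C :: (Δ1 ++ Δ2)) hp hchain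
    have r' := SuperLLG.ex r
      (((perm_cons_app C _ _).cons B).trans (perm_cons_app B _ _)).symm
    have hc := SuperLLG.parr r'
    exact SuperLLG.ex hc (perm_cons_app_app _ _ _ _)
  | one b =>
    intro L Δ hp hperm
    match L with
    | [] =>
      simp only [List.map_nil, List.nil_append] at hperm ⊢
      exact SuperLLG.ex (SuperLLG.one b) hperm
    | pr :: L' =>
      exfalso
      have : Formula.wn pr.1 (Formula.wn e2 A) ∈ [Formula.one (E := E)] :=
        hperm.symm.subset (by simp)
      simp at this
  | @bot b Γ h ih =>
    intro L Δ hp hperm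
    rcases cons_perm_cases _ hperm with ⟨P, y, Q, rfl, hx, _⟩ | ⟨Δ1, Δ2, rfl, hperm'⟩
    · exact nomatch hx
    have r := ih L (Δ1 ++ Δ2) hp hperm'
    exact SuperLLG.ex (SuperLLG.bot r) (perm_cons_app_app _ _ _ _)
  | @awith b B C Γ h1 h2 ih1 ih2 =>
    intro L Δ hp hperm
    rcases cons_perm_cases _ hperm with ⟨P, y, Q, rfl, hx, _⟩ | ⟨Δ1, Δ2, rfl, hperm'⟩
    · exact nomatch hx
    have r1 := ih1 L (B :: (Δ1 ++ Δ2)) hp ((hperm'.cons B).trans (perm_cons_app _ _ _))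
    have r2 := ih2 L (C :: (Δ1 ++ Δ2)) hp ((hperm'.cons C).trans (perm_cons_app _ _ _))
    have hc := SuperLLG.awith (SuperLLG.ex r1 (perm_cons_app _ _ _).symm)
      (SuperLLG.ex r2 (perm_cons_app _ _ _).symm)
    exact SuperLLG.ex hc (perm_cons_app_app _ _ _ _)
  | @aplus1 b B C Γ h ih =>
    intro L Δ hp hperm
    rcases cons_perm_cases _ hperm with ⟨P, y, Q, rfl, hx, _⟩ | ⟨Δ1, Δ2, rfl, hperm'⟩
    · exact nomatch hx
    have r := ih L (B :: (Δ1 ++ Δ2)) hp ((hperm'.cons B).trans (perm_cons_app _ _ _))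
    have hc := SuperLLG.aplus1 (B := C) (SuperLLG.ex r (perm_cons_app _ _ _).symm)
    exact SuperLLG.ex hc (perm_cons_app_app _ _ _ _)
  | @aplus2 b B C Γ h ih =>
    intro L Δ hp hperm
    rcases cons_perm_cases _ hperm with ⟨P, y, Q, rfl, hx, _⟩ | ⟨Δ1, Δ2, rfl, hperm'⟩
    · exact nomatch hx
    have r := ih L (C :: (Δ1 ++ Δ2)) hp ((hperm'.cons C).trans (perm_cons_app _ _ _))
    have hc := SuperLLG.aplus2 (A := B) (SuperLLG.ex r (perm_cons_app _ _ _).symm)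
    exact SuperLLG.ex hc (perm_cons_app_app _ _ _ _)
  | top b Γ =>
    intro L Δ hp hperm
    rcases cons_perm_cases _ hperm with ⟨P, y, Q, rfl, hx, _⟩ | ⟨Δ1, Δ2, rfl, hperm'⟩
    · exact nomatch hx
    exact SuperLLG.ex (SuperLLG.top b _) (perm_cons_app_app _ _ _ _)
  | @der b e B Γ hde h ih =>
    intro L Δ hp hperm
    rcases cons_perm_cases _ hperm with ⟨P, y, Q, rfl, hx, hperm'⟩ | ⟨Δ1, Δ2, rfl, hperm'⟩
    · injection hx with hx1 hx2
      subst hx1; subst hx2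
      have mpq : ∀ pr ∈ P ++ Q, dg pr.1 e2 pr.2 := fun pr hpr =>
        hp pr (List.perm_middle.symm.subset (List.mem_cons_of_mem _ hpr))
      have r := ih (P ++ Q) (Formula.wn e2 A :: Δ) mpq
        ((hperm'.cons _).trans (perm_cons_app _ _ _))
      have r' := SuperLLG.ex r (perm_cons_app _ _ _).symm
      have hco : co [e2] y.2 := gir2 y.1 e2 y.2 hde (hp y List.mem_append_cons_self)
      have hc := SuperLLG.con hco r'
      refine SuperLLG.ex hc ?_
      simpa [List.map_append, List.append_assoc] using
        perm_cons_app (Formula.wn y.2 A) (P.map (fun pr => Formula.wn pr.2 A))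
          (Q.map (fun pr => Formula.wn pr.2 A) ++ Δ)
    · have r := ih L (B :: (Δ1 ++ Δ2)) hp ((hperm'.cons B).trans (perm_cons_app _ _ _))
      have hc := SuperLLG.der hde (SuperLLG.ex r (perm_cons_app _ _ _).symm)
      exact SuperLLG.ex hc (perm_cons_app_app _ _ _ _)
  | @con b l e B Γ hco h ih =>
    intro L Δ hp hperm
    rcases cons_perm_cases _ hperm with ⟨P, y, Q, rfl, hx, hperm'⟩ | ⟨Δ1, Δ2, rfl, hperm'⟩
    · injection hx with hx1 hx2
      subst hx1; subst hx2
      obtain ⟨l', hf, hco'⟩ := gir3 l y.1 e2 y.2 hco (hp y List.mem_append_cons_self)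
      have hlen := hf.length_eq
      have hzmapF : (l.zip l').map (fun pr => Formula.wn pr.1 (Formula.wn e2 A)) =
          l.map (fun ei => Formula.wn ei (Formula.wn e2 A)) := by
        rw [show (fun pr : E × E => Formula.wn pr.1 (Formula.wn e2 A)) =
          (fun x => Formula.wn x (Formula.wn e2 A)) ∘ Prod.fst from rfl, ← List.map_map,
          List.map_fst_zip hlen.le]
      have hzmapG : (l.zip l').map (fun pr => Formula.wn pr.2 A) =
          l'.map (fun x => Formula.wn x A) := by
        rw [show (fun pr : E × E => Formula.wn pr.2 A) =
          (fun x => Formula.wn x A) ∘ Prod.snd from rfl, ← List.map_map,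
          List.map_snd_zip hlen.ge]
      have mzl : ∀ pr ∈ l.zip l' ++ (P ++ Q), dg pr.1 e2 pr.2 := by
        intro pr hpr
        rcases List.mem_append.1 hpr with hpr | hpr
        · exact forall₂_zip_mem hf pr hpr
        · exact hp pr (List.perm_middle.symm.subset (List.mem_cons_of_mem _ hpr))
      have hchain : (l.map (fun ei => Formula.wn ei (Formula.wn e2 A)) ++ Γ).Perm
          ((l.zip l' ++ (P ++ Q)).map (fun pr => Formula.wn pr.1 (Formula.wn e2 A)) ++ Δ) := by
        rw [List.map_append, hzmapF, List.append_assoc]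
        exact hperm'.append_left _
      have r := ih (l.zip l' ++ (P ++ Q)) Δ mzl hchain
      rw [List.map_append, hzmapG, List.append_assoc] at r
      have hc := SuperLLG.con hco' r
      refine SuperLLG.ex hc ?_
      simpa [List.map_append, List.append_assoc] using
        perm_cons_app (Formula.wn y.2 A) (P.map (fun pr => Formula.wn pr.2 A))
          (Q.map (fun pr => Formula.wn pr.2 A) ++ Δ)
    · have hchain : (l.map (fun ei => Formula.wn ei B) ++ Γ).Perm
          (L.map (fun pr => Formula.wn pr.1 (Formula.wn e2 A)) ++
            (l.map (fun ei => Formula.wn ei B) ++ (Δ1 ++ Δ2))) :=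
        (hperm'.append_left _).trans (perm_app_swap3 _ _ _)
      have r := ih L _ hp hchain
      have r' := SuperLLG.ex r (perm_app_swap3 _ _ _)
      have hc := SuperLLG.con hco r'
      exact SuperLLG.ex hc (perm_cons_app_app _ _ _ _)
  | @promg b e B eps es As hf hlen hp0 h ih =>
    intro L Δ hp hperm
    rcases cons_perm_cases _ hperm with ⟨P, y, Q, rfl, hx, _⟩ | ⟨Δ1, Δ2, rfl, hperm'⟩
    · exact nomatch hx
    have hfl : eps.length = es.length := hf.length_eq
    obtain ⟨hes_eq, heps_eq⟩ := zip3_spec Formula.wn eps es As hfl hlen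
    rw [hes_eq] at hperm'
    obtain ⟨T', hTperm, hTmap⟩ := perm_map_pullback _ hperm'
    have htad : T'.take L.length ++ T'.drop L.length = T' := List.take_append_drop _ _
    have hT1len : (T'.take L.length).length = L.length := by
      have hc := congrArg List.length hTmap
      simp only [List.length_map, List.length_append] at hc
      simp only [List.length_take]
      omega
    have hT'ge : L.length ≤ T'.length := by
      have hc := congrArg List.length hTmap
      simp only [List.length_map, List.length_append] at hc
      omega
    rw [← htad, List.map_append] at hTmap
    obtain ⟨hmap1, hmap2⟩ := List.append_inj hTmap (by simpa using hT1len)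
    have hforall := map_eq_map_forall₂ hmap1
    have hT_dg : ∀ t ∈ eps.zip (es.zip As), dg e t.1 t.2.1 := zip3_mem hf As
    have hT1_dg : ∀ t ∈ T'.take L.length, dg e t.1 t.2.1 := fun t ht =>
      hT_dg t (hTperm.symm.subset (by rw [← htad]; exact List.mem_append_left _ ht))
    have hT2_dg : ∀ t ∈ T'.drop L.length, dg e t.1 t.2.1 := fun t ht =>
      hT_dg t (hTperm.symm.subset (by rw [← htad]; exact List.mem_append_right _ ht))
    obtain ⟨L', hL'dg, hL'map, hL'rel⟩ := choose_ds gir4 hforall hT1_dg hp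
    have hL'len : L'.length = L.length := hL'rel.length_eq
    have hTg' : ((eps.zip (es.zip As)).map (fun t => Formula.wn t.1 t.2.2)).Perm
        ((T'.take L.length).map (fun t => Formula.wn t.1 t.2.2) ++
          (T'.drop L.length).map (fun t => Formula.wn t.1 t.2.2)) := by
      rw [← List.map_append, htad]; exact hTperm.map _
    rw [← hL'map] at hTg'
    have hchain : (B :: List.zipWith Formula.wn eps As).Perm
        (L'.map (fun pr => Formula.wn pr.1 (Formula.wn e2 A)) ++
          (B :: (T'.drop L.length).map (fun t => Formula.wn t.1 t.2.2))) := by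
      rw [heps_eq]
      exact (hTg'.cons B).trans (perm_cons_app _ _ _)
    have r := ih L' (B :: (T'.drop L.length).map (fun t => Formula.wn t.1 t.2.2)) hL'dg hchain
    have r' := SuperLLG.ex r (perm_cons_app _ _ _).symm
    have hz1 : List.zipWith Formula.wn
        (L'.map Prod.snd ++ (T'.drop L.length).map (fun t => t.1))
        (List.replicate L.length A ++ (T'.drop L.length).map (fun t => t.2.2)) =
        L'.map (fun pr => Formula.wn pr.2 A) ++
          (T'.drop L.length).map (fun t => Formula.wn t.1 t.2.2) := by
      rw [List.zipWith_append (by simp [hL'len])]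
      congr 1
      · have hrep : List.replicate L.length A =
            List.replicate (L'.map Prod.snd).length A := by simp [hL'len]
        rw [hrep, zipWith_replicate_right', List.map_map]
        rfl
      · rw [zipWith_map_same]
    have hz2 : List.zipWith Formula.wn
        (L.map Prod.snd ++ (T'.drop L.length).map (fun t => t.2.1))
        (List.replicate L.length A ++ (T'.drop L.length).map (fun t => t.2.2)) =
        L.map (fun pr => Formula.wn pr.2 A) ++
          (T'.drop L.length).map (fun t => Formula.wn t.2.1 t.2.2) := by
      rw [List.zipWith_append (by simp)]
      congr 1
      · have hrep : List.replicate L.length A =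
            List.replicate (L.map Prod.snd).length A := by simp
        rw [hrep, zipWith_replicate_right', List.map_map]
        rfl
      · rw [zipWith_map_same]
    have hfnew : List.Forall₂ (fun εi ei => dg e εi ei)
        (L'.map Prod.snd ++ (T'.drop L.length).map (fun t => t.1))
        (L.map Prod.snd ++ (T'.drop L.length).map (fun t => t.2.1)) := by
      refine f2_append ?_ ?_
      · rw [List.forall₂_map_left_iff, List.forall₂_map_right_iff]
        exact hL'rel
      · rw [List.forall₂_map_left_iff, List.forall₂_map_right_iff]
        exact List.forall₂_same.2 hT2_dg
    have hlen_new : (L'.map Prod.snd ++ (T'.drop L.length).map (fun t => t.1)).length =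
        (List.replicate L.length A ++ (T'.drop L.length).map (fun t => t.2.2)).length := by
      simp [hL'len]
    have hplen : (List.replicate L.length A ++
        (T'.drop L.length).map (fun t => t.2.2)).length = As.length := by
      have hT'len : T'.length = (eps.zip (es.zip As)).length := hTperm.length_eq.symm
      have htsum : (T'.take L.length).length + (T'.drop L.length).length = T'.length := by
        rw [← htad]; simp; omega
      simp only [List.length_zip, List.length_append, List.length_map,
        List.length_replicate] at hT'len ⊢
      omega
    have hpremise : SuperLLG de co dg p b (B :: List.zipWith Formula.wn
        (L'.map Prod.snd ++ (T'.drop L.length).map (fun t => t.1))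
        (List.replicate L.length A ++ (T'.drop L.length).map (fun t => t.2.2))) := by
      rw [hz1]; exact r'
    have hpromg := SuperLLG.promg (e := e) hfnew hlen_new (hplen ▸ hp0) hpremise
    rw [hz2, hmap2] at hpromg
    exact SuperLLG.ex hpromg (perm_cons_app_app _ _ _ _)

/-- Girardization: under the Girardization axioms, every sequent provable in superLL is
provable with Girard's promotion instead of functorial promotion and digging, and
cut-freeness is preserved. -/
theorem superLL_girardization {E : Type}
    (de : E → Prop) (co : List E → E → Prop) (dg : E → E → E → Prop) (p : ℕ → E → Prop)
    (gir1 : ∀ e1 e2 e : E, dg e1 e2 e → p 1 e1)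
    (gir2 : ∀ e1 e2 e : E, de e1 → dg e1 e2 e → co [e2] e)
    (gir3 : ∀ (l : List E) (e1 e2 e : E), co l e1 → dg e1 e2 e →
      ∃ l' : List E, List.Forall₂ (fun εi ε'i => dg εi e2 ε'i) l l' ∧ co l' e)
    (gir4 : ∀ e1 e2 e3 e' e : E, dg e1 e2 e' → dg e' e3 e →
      ∃ e'' : E, dg e2 e3 e'' ∧ dg e1 e'' e)
    (gir5 : ∀ (n : ℕ) (e : E), 0 < n → p n e → ∃ e' : E, de e' ∧ dg e e' e)
    :
    ∀ (b : Bool) (Γ : List (Formula E)),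
      SuperLL de co dg p b Γ → SuperLLG de co dg p b Γ := by
  intro b Γ h
  induction h with
  | ax b A => exact SuperLLG.ax b A
  | ex h hpm ih => exact SuperLLG.ex ih hpm
  | cut h1 h2 ih1 ih2 => exact SuperLLG.cut ih1 ih2
  | tens h1 h2 ih1 ih2 => exact SuperLLG.tens ih1 ih2
  | parr h ih => exact SuperLLG.parr ih
  | one b => exact SuperLLG.one b
  | bot h ih => exact SuperLLG.bot ih
  | awith h1 h2 ih1 ih2 => exact SuperLLG.awith ih1 ih2
  | aplus1 h ih => exact SuperLLG.aplus1 ih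
  | aplus2 h ih => exact SuperLLG.aplus2 ih
  | top b Γ => exact SuperLLG.top b Γ
  | der hde h ih => exact SuperLLG.der hde ih
  | con hco h ih => exact SuperLLG.con hco ih
  | @dig b e1 e2' e B Γ hdg h ih =>
    have hres := dig_adm gir1 gir2 gir3 gir4 e2' B ih [(e1, e)] Γ
      (by intro pr hpr; rcases List.mem_singleton.1 hpr with rfl; exact hdg)
      (by simp)
    simpa using hres
  | @prom b e B Δ hp h ih =>
    cases Δ with
    | nil =>
      have hc := SuperLLG.promg (e := e) (eps := []) (es := []) (As := [])
        List.Forall₂.nil rfl hp ih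
      simpa using hc
    | cons C Δ' =>
      obtain ⟨e', hde', hdg'⟩ := gir5 (C :: Δ').length e (by simp) hp
      have h1 : SuperLLG de co dg p b ((C :: Δ') ++ [B]) :=
        SuperLLG.ex ih (List.perm_append_singleton B (C :: Δ')).symm
      have h2 := der_list hde' (C :: Δ') [B] h1
      have h3 : SuperLLG de co dg p b (B :: (C :: Δ').map (Formula.wn e')) :=
        SuperLLG.ex h2 (List.perm_append_singleton B ((C :: Δ').map (Formula.wn e')))
      have hprem : SuperLLG de co dg p b (B :: List.zipWith Formula.wn
          (List.replicate (C :: Δ').length e') (C :: Δ')) := by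
        rw [zipWith_replicate_left']
        exact h3
      have hc := SuperLLG.promg (e := e)
        (forall₂_replicate' hdg' (C :: Δ').length)
        (by simp) (by simpa using hp) hprem
      rw [zipWith_replicate_left'] at hc
      exact hc
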